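/- Let ℓ ≥ 3 be an odd integer, and suppose ψ_ℓ, ψ_{2ℓ} ∈ ℤ[X] satisfy Φ_ℓ(q) = q^{φ(ℓ)/2}·ψ_ℓ(q + q⁻¹) and Φ_{2ℓ}(q) = q^{φ(2ℓ)/2}·ψ_{2ℓ}(q + q⁻¹) in the field of rational functions ℚ(q), where Φ_k is the k-th cyclotomic polynomial. Then the reductions of ψ_ℓ and ψ_{2ℓ} modulo 2 are equal in (ℤ/2ℤ)[X]. -/

import Mathlib

open Polynomial

/-- Auxiliary "denominator-clearing" transform: `TT N p = X^N · p((X²+1)/X)` as a polynomial. -/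
noncomputable def TT {R : Type*} [CommRing R] (N : ℕ) (p : Polynomial R) : Polynomial R :=
  ∑ i ∈ Finset.range (N + 1), C (p.coeff i) * (X ^ 2 + 1) ^ i * X ^ (N - i)

lemma TT_map {R S : Type*} [CommRing R] [CommRing S] (f : R →+* S) (N : ℕ) (p : Polynomial R) :
    (TT N p).map f = TT N (p.map f) := by
  simp [TT, Polynomial.map_sum, Polynomial.map_mul, Polynomial.map_pow, Polynomial.map_add,
    coeff_map]

lemma TT_sub {R : Type*} [CommRing R] (N : ℕ) (p q : Polynomial R) :
    TT N (p - q) = TT N p - TT N q := by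
  simp [TT, coeff_sub, sub_mul, Finset.sum_sub_distrib]

lemma TT_eq_zero {R : Type*} [CommRing R] (N : ℕ) {p : Polynomial R}
    (hp : p.natDegree ≤ N) (h : TT N p = 0) : p = 0 := by
  by_contra hne
  set n := p.natDegree with hn
  have hkey : (TT N p).coeff (N - n) = p.coeff n := by
    rw [TT, finset_sum_coeff]
    rw [Finset.sum_eq_single_of_mem n (Finset.mem_range.mpr (Nat.lt_succ_of_le hp))]
    · rw [mul_assoc, coeff_C_mul, coeff_mul_X_pow', if_pos le_rfl, Nat.sub_self,
        coeff_zero_eq_eval_zero]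
      simp
    · intro i _ hi
      rw [mul_assoc, coeff_C_mul, coeff_mul_X_pow']
      rcases lt_or_gt_of_ne hi with h1 | h1
      · rw [if_neg (by omega), mul_zero]
      · rw [coeff_eq_zero_of_natDegree_lt h1, zero_mul]
  rw [h, coeff_zero] at hkey
  exact hne (leadingCoeff_eq_zero.mp hkey.symm)

lemma aeval_TT (N : ℕ) (p : Polynomial ℤ) (hp : p.natDegree ≤ N) :
    aeval (RatFunc.X : RatFunc ℚ) (TT N p) =
      (RatFunc.X : RatFunc ℚ) ^ N *
        aeval ((RatFunc.X : RatFunc ℚ) + (RatFunc.X : RatFunc ℚ)⁻¹) p := by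
  have hx : (RatFunc.X : RatFunc ℚ) ≠ 0 := RatFunc.X_ne_zero
  rw [Polynomial.aeval_eq_sum_range' (Nat.lt_succ_of_le hp), TT, map_sum, Finset.mul_sum]
  refine Finset.sum_congr rfl fun i hi => ?_
  have hiN : i ≤ N := Nat.lt_succ_iff.mp (Finset.mem_range.mp hi)
  simp only [map_mul, map_pow, map_add, map_one, aeval_X, aeval_C]
  have h1 : ((RatFunc.X : RatFunc ℚ) ^ 2 + 1) =
      ((RatFunc.X : RatFunc ℚ) + (RatFunc.X : RatFunc ℚ)⁻¹) * RatFunc.X := by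
    field_simp
  have h2 : (RatFunc.X : RatFunc ℚ) ^ i * (RatFunc.X : RatFunc ℚ) ^ (N - i) =
      (RatFunc.X : RatFunc ℚ) ^ N := by
    rw [← pow_add]
    congr 1
    omega
  rw [h1, mul_pow, Algebra.smul_def, ← h2]
  ring

lemma aevalX_injective :
    Function.Injective fun p : Polynomial ℤ => aeval (RatFunc.X : RatFunc ℚ) p := by
  have key : ∀ r : Polynomial ℤ, aeval (RatFunc.X : RatFunc ℚ) r =
      algebraMap (Polynomial ℚ) (RatFunc ℚ) (r.map (Int.castRingHom ℚ)) := by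
    intro r
    have hmap : aeval (RatFunc.X : RatFunc ℚ) (r.map (Int.castRingHom ℚ)) =
        aeval (RatFunc.X : RatFunc ℚ) r := by
      rw [aeval_def, aeval_def, eval₂_map]
      congr 1
      exact RingHom.ext_int _ _
    rw [← hmap]
    set q := r.map (Int.castRingHom ℚ)
    have h2 : (RatFunc.X : RatFunc ℚ) =
        (IsScalarTower.toAlgHom ℚ (Polynomial ℚ) (RatFunc ℚ)) X := by
      simp [RatFunc.algebraMap_X]
    rw [h2, aeval_algHom_apply, aeval_X_left_apply]
    rfl
  intro p q h
  simp only [key] at h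
  have h3 := IsFractionRing.injective (Polynomial ℚ) (RatFunc ℚ) h
  exact Polynomial.map_injective _ (Int.cast_injective) h3

theorem psi_eq_psi_two_mul_mod_two (ℓ : ℕ) (hℓ : 3 ≤ ℓ) (hodd : Odd ℓ)
    (ψℓ ψ2ℓ : Polynomial ℤ)
    (hψℓ : aeval (RatFunc.X : RatFunc ℚ) (Polynomial.cyclotomic ℓ ℤ) =
        (RatFunc.X : RatFunc ℚ) ^ (Nat.totient ℓ / 2) *
          aeval ((RatFunc.X : RatFunc ℚ) + (RatFunc.X : RatFunc ℚ)⁻¹) ψℓ)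
    (hψ2ℓ : aeval (RatFunc.X : RatFunc ℚ) (Polynomial.cyclotomic (2 * ℓ) ℤ) =
        (RatFunc.X : RatFunc ℚ) ^ (Nat.totient (2 * ℓ) / 2) *
          aeval ((RatFunc.X : RatFunc ℚ) + (RatFunc.X : RatFunc ℚ)⁻¹) ψ2ℓ) :
    ψℓ.map (Int.castRingHom (ZMod 2)) = ψ2ℓ.map (Int.castRingHom (ZMod 2)) := by
  have h2ℓ : ¬(2 ∣ ℓ) := by
    rw [Nat.two_dvd_ne_zero]
    exact Nat.odd_iff.mp hodd
  have hcop : Nat.Coprime 2 ℓ := (Nat.prime_two.coprime_iff_not_dvd).mpr h2ℓ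
  have htot : Nat.totient (2 * ℓ) = Nat.totient ℓ := by
    rw [Nat.totient_mul hcop, Nat.totient_two, one_mul]
  set m := Nat.totient ℓ / 2 with hm
  set N := max ψℓ.natDegree ψ2ℓ.natDegree with hN
  -- polynomial identities over ℤ
  have e1 : Polynomial.cyclotomic ℓ ℤ * X ^ N = X ^ m * TT N ψℓ := by
    apply aevalX_injective
    simp only [map_mul, map_pow, aeval_X]
    rw [aeval_TT N ψℓ (le_max_left _ _), hψℓ]
    ring
  have e2 : Polynomial.cyclotomic (2 * ℓ) ℤ * X ^ N = X ^ m * TT N ψ2ℓ := by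
    apply aevalX_injective
    simp only [map_mul, map_pow, aeval_X]
    rw [aeval_TT N ψ2ℓ (le_max_right _ _), hψ2ℓ, htot]
    ring
  -- reduce mod 2
  have f1 := congrArg (Polynomial.map (Int.castRingHom (ZMod 2))) e1
  have f2 := congrArg (Polynomial.map (Int.castRingHom (ZMod 2))) e2
  simp only [Polynomial.map_mul, Polynomial.map_pow, Polynomial.map_X, map_cyclotomic_int,
    TT_map] at f1 f2
  have hc : Polynomial.cyclotomic (2 * ℓ) (ZMod 2) = Polynomial.cyclotomic ℓ (ZMod 2) := by
    haveI : Fact (Nat.Prime 2) := ⟨Nat.prime_two⟩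
    have := Polynomial.cyclotomic_mul_prime_eq_pow_of_not_dvd (ZMod 2) h2ℓ
    rw [mul_comm] at this
    simpa using this
  rw [hc, f1] at f2
  have hXm : (X : Polynomial (ZMod 2)) ^ m ≠ 0 := pow_ne_zero _ X_ne_zero
  have f3 : TT N (ψℓ.map (Int.castRingHom (ZMod 2))) =
      TT N (ψ2ℓ.map (Int.castRingHom (ZMod 2))) :=
    mul_left_cancel₀ hXm f2
  have hd1 : (ψℓ.map (Int.castRingHom (ZMod 2))).natDegree ≤ N :=
    le_trans natDegree_map_le (le_max_left _ _)
  have hd2 : (ψ2ℓ.map (Int.castRingHom (ZMod 2))).natDegree ≤ N :=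
    le_trans natDegree_map_le (le_max_right _ _)
  have hsub : ψℓ.map (Int.castRingHom (ZMod 2)) - ψ2ℓ.map (Int.castRingHom (ZMod 2)) = 0 := by
    apply TT_eq_zero N
    · exact le_trans (natDegree_sub_le _ _) (max_le hd1 hd2)
    · rw [TT_sub, f3, sub_self]
  exact sub_eq_zero.mp hsub
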